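/- Let r > 0. A tuple (a,b,c,d,e) ∈ ℝ⁵ satisfies the system r·b·c + d·e = 0, −r·a·c + d² − e² = 0, b·d + e·(a+c) = 0, r·c·d + b·e − a·d = 0 if and only if it has one of the following forms: (i) (0,0,c,0,0) with c ∈ ℝ; (ii) (a,b,0,0,0) with a,b ∈ ℝ; (iii) (r·c, 0, c, ±r·c, 0) with c ∈ ℝ; (iv) (a, 0, −a, 0, ε·√r·a) with a ∈ ℝ, ε ∈ {−1,1}; (v) (ε₁ε₂·((1−r)/√r)·e, ε₁·e, −(ε₁ε₂/√r)·e, ε₂·√r·e, e) with e ∈ ℝ, ε₁, ε₂ ∈ {−1,1}. These tuples are exactly the components (a,b,c,d,e) (the coefficient f being arbitrary) of the geodesic vectors X = aL¹ + bL² + cL³ + dL⁴ + eL⁵ + fL⁶ of the Siegel–Jacobi upper half-plane, where r = √(α/β). -/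

import Mathlib

/-- Classification of the solutions of the algebraic system arising from the
geodesic lemma on the Siegel–Jacobi upper half-plane with the balanced metric
(`r = √(α/β) > 0`): `(a,b,c,d,e) ∈ ℝ⁵` satisfies
`rbc + de = 0`, `−rac + d² − e² = 0`, `bd + e(a+c) = 0`, `rcd + be − ad = 0`
if and only if it is of one of the five listed forms; these are exactly the
components of the geodesic vectors `X = aL¹+bL²+cL³+dL⁴+eL⁵+fL⁶` (with `f`
arbitrary). -/
theorem geodesic_vectors_classification (r : ℝ) (hr : 0 < r) (a b c d e : ℝ) :
    (r * b * c + d * e = 0 ∧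
     -(r * a * c) + d ^ 2 - e ^ 2 = 0 ∧
     b * d + e * (a + c) = 0 ∧
     r * c * d + b * e - a * d = 0) ↔
    ((a = 0 ∧ b = 0 ∧ d = 0 ∧ e = 0) ∨
     (c = 0 ∧ d = 0 ∧ e = 0) ∨
     (a = r * c ∧ b = 0 ∧ (d = r * c ∨ d = -(r * c)) ∧ e = 0) ∨
     (b = 0 ∧ c = -a ∧ d = 0 ∧
       ∃ ε : ℝ, (ε = 1 ∨ ε = -1) ∧ e = ε * Real.sqrt r * a) ∨
     (∃ ε₁ ε₂ : ℝ, (ε₁ = 1 ∨ ε₁ = -1) ∧ (ε₂ = 1 ∨ ε₂ = -1) ∧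
       a = ε₁ * ε₂ * ((1 - r) / Real.sqrt r) * e ∧
       b = ε₁ * e ∧
       c = -(ε₁ * ε₂ / Real.sqrt r) * e ∧
       d = ε₂ * Real.sqrt r * e)) := by
  have hs : 0 < Real.sqrt r := Real.sqrt_pos.mpr hr
  set s := Real.sqrt r with hsdef
  have hs2 : s ^ 2 = r := Real.sq_sqrt hr.le
  have hsne : s ≠ 0 := ne_of_gt hs
  have hrne : r ≠ 0 := ne_of_gt hr
  constructor
  · rintro ⟨h1, h2, h3, h4⟩
    by_cases hd : d = 0
    · by_cases he : e = 0
      · subst hd; subst he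
        by_cases hc : c = 0
        · right; left; exact ⟨hc, rfl, rfl⟩
        · left
          refine ⟨?_, ?_, rfl, rfl⟩
          · have h : r * a * c = 0 := by linear_combination -h2
            rcases mul_eq_zero.mp h with h | h
            · rcases mul_eq_zero.mp h with h | h
              · exact absurd h hrne
              · exact h
            · exact absurd h hc
          · have h : r * b * c = 0 := by linear_combination h1
            rcases mul_eq_zero.mp h with h | h
            · rcases mul_eq_zero.mp h with h | h
              · exact absurd h hrne
              · exact h
            · exact absurd h hc
      · -- d = 0, e ≠ 0 : case (iv)
        subst hd
        have hb : b = 0 := by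
          have h : b * e = 0 := by linear_combination h4
          exact (mul_eq_zero.mp h).resolve_right he
        have hc : c = -a := by
          have h : e * (a + c) = 0 := by linear_combination h3 - 0 * hb
          have := (mul_eq_zero.mp h).resolve_left he
          linarith
        right; right; right; left
        refine ⟨hb, hc, rfl, ?_⟩
        have hfac : (e - s * a) * (e + s * a) = 0 := by
          linear_combination (-1) * h2 + (-(a^2)) * hs2 + (-(r*a)) * hc
        rcases mul_eq_zero.mp hfac with h | h
        · exact ⟨1, Or.inl rfl, by linarith⟩
        · exact ⟨-1, Or.inr rfl, by linarith⟩
    · by_cases he : e = 0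
      · -- e = 0, d ≠ 0 : case (iii)
        subst he
        have hb : b = 0 := by
          have h : b * d = 0 := by linear_combination h3
          exact (mul_eq_zero.mp h).resolve_right hd
        have ha : a = r * c := by
          have h : d * (r * c - a) = 0 := by linear_combination h4
          have := (mul_eq_zero.mp h).resolve_left hd
          linarith
        right; right; left
        refine ⟨ha, hb, ?_, rfl⟩
        have hfac : (d - r * c) * (d + r * c) = 0 := by
          linear_combination h2 + r * c * ha
        rcases mul_eq_zero.mp hfac with h | h
        · left; linarith
        · right; linarith
      · -- d ≠ 0, e ≠ 0
        have key : b * (d ^ 2 - r ^ 2 * c ^ 2) = 0 := by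
          linear_combination e * h4 + (a - r * c) * h1 + b * h2
        have hb : b ≠ 0 := by
          intro hb0
          have h : d * e = 0 := by linear_combination h1 - r * c * hb0
          rcases mul_eq_zero.mp h with h | h
          · exact hd h
          · exact he h
        have hdd : d ^ 2 - r ^ 2 * c ^ 2 = 0 :=
          (mul_eq_zero.mp key).resolve_left hb
        have hc : c ≠ 0 := by
          intro hc0
          apply hd
          have h : d ^ 2 = 0 := by linear_combination hdd + r^2 * c * hc0
          exact pow_eq_zero_iff (two_ne_zero) |>.mp h
        have hfac : (d - r * c) * (d + r * c) = 0 := by linear_combination hdd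
        right; right; right; right
        rcases mul_eq_zero.mp hfac with hdc | hdc
        · -- d = r * c ; ε₁ = -1
          have hdrc : d = r * c := by linarith
          have hbe : b = -e := by
            have h : r * c * (b + e) = 0 := by linear_combination h1 - e * hdrc
            rcases mul_eq_zero.mp h with h | h
            · rcases mul_eq_zero.mp h with h | h
              · exact absurd h hrne
              · exact absurd h hc
            · linarith
          have hac : a = (r - 1) * c := by
            have h : e * (a + c - r * c) = 0 := by
              linear_combination h3 - d * hbe + e * hdrc
            have := (mul_eq_zero.mp h).resolve_left he
            linarith
          have hece : r * c ^ 2 - e ^ 2 = 0 := by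
            linear_combination h2 + r * c * hac - (d + r * c) * hdrc
          have hfac2 : (e - s * c) * (e + s * c) = 0 := by
            linear_combination (-1) * hece + (-(c^2)) * hs2
          rcases mul_eq_zero.mp hfac2 with h | h
          · -- e = s * c ; ε₂ = 1
            have hec : e = s * c := by linarith
            refine ⟨-1, 1, Or.inr rfl, Or.inl rfl, ?_, ?_, ?_, ?_⟩
            · rw [hac, hec]; field_simp; ring
            · linarith [hbe]
            · rw [hec]; field_simp
            · rw [hdrc, hec]; linear_combination (-c) * hs2
          · -- e = -s * c ; ε₂ = -1
            have hec : e = -(s * c) := by linarith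
            refine ⟨-1, -1, Or.inr rfl, Or.inr rfl, ?_, ?_, ?_, ?_⟩
            · rw [hac, hec]; field_simp; ring
            · linarith [hbe]
            · rw [hec]; field_simp
            · rw [hdrc, hec]; linear_combination (-c) * hs2
        · -- d = -(r * c) ; ε₁ = 1
          have hdrc : d = -(r * c) := by linarith
          have hbe : b = e := by
            have h : r * c * (b - e) = 0 := by linear_combination h1 - e * hdrc
            rcases mul_eq_zero.mp h with h | h
            · rcases mul_eq_zero.mp h with h | h
              · exact absurd h hrne
              · exact absurd h hc
            · linarith
          have hac : a = (r - 1) * c := by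
            have h : e * (a + c - r * c) = 0 := by
              linear_combination h3 - d * hbe - e * hdrc
            have := (mul_eq_zero.mp h).resolve_left he
            linarith
          have hece : r * c ^ 2 - e ^ 2 = 0 := by
            linear_combination h2 + r * c * hac - (d - r * c) * hdrc
          have hfac2 : (e - s * c) * (e + s * c) = 0 := by
            linear_combination (-1) * hece + (-(c^2)) * hs2
          rcases mul_eq_zero.mp hfac2 with h | h
          · -- e = s * c ; ε₂ = -1
            have hec : e = s * c := by linarith
            refine ⟨1, -1, Or.inl rfl, Or.inr rfl, ?_, ?_, ?_, ?_⟩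
            · rw [hac, hec]; field_simp; ring
            · linarith [hbe]
            · rw [hec]; field_simp
            · rw [hdrc, hec]; linear_combination c * hs2
          · -- e = -s * c ; ε₂ = 1
            have hec : e = -(s * c) := by linarith
            refine ⟨1, 1, Or.inl rfl, Or.inl rfl, ?_, ?_, ?_, ?_⟩
            · rw [hac, hec]; field_simp; ring
            · linarith [hbe]
            · rw [hec]; field_simp
            · rw [hdrc, hec]; linear_combination c * hs2
  · rintro (⟨ha, hb, hd, he⟩ | ⟨hc, hd, he⟩ | ⟨ha, hb, hdd, he⟩ |
      ⟨hb, hc, hd, ε, hε, he⟩ | ⟨ε₁, ε₂, hε₁, hε₂, ha, hb, hc, hd⟩)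
    · subst ha; subst hb; subst hd; subst he
      refine ⟨by ring, by ring, by ring, by ring⟩
    · subst hc; subst hd; subst he
      refine ⟨by ring, by ring, by ring, by ring⟩
    · subst ha; subst hb; subst he
      rcases hdd with hdd | hdd <;> subst hdd <;>
        exact ⟨by ring, by ring, by ring, by ring⟩
    · subst hb; subst hc; subst hd
      rcases hε with rfl | rfl <;> subst he <;>
        exact ⟨by ring, by linear_combination (-(a^2)) * hs2, by ring, by ring⟩
    · subst ha; subst hb; subst hc; subst hd
      have he1 : ε₁ ^ 2 = 1 := by rcases hε₁ with rfl | rfl <;> norm_num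
      have he2 : ε₂ ^ 2 = 1 := by rcases hε₂ with rfl | rfl <;> norm_num
      refine ⟨?_, ?_, ?_, ?_⟩
      · field_simp
        linear_combination (ε₂*e^2)*hs2 - (r*ε₂*e^2)*he1
      · field_simp
        linear_combination (r*e^2*ε₂^2 - r^2*e^2*ε₂^2)*he1 +
          (ε₂^2*e^2*(s^2+r) - e^2)*hs2 + (r*e^2)*he2
      · field_simp
        linear_combination (ε₁*ε₂*e^2)*hs2
      · field_simp
        linear_combination (-(ε₁*e^2))*he2
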